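/- Let m ≥ 1 be fixed. There exist constants c₄ > 0, β > 0, and δ' > 0 such that, for all n ≥ m sufficiently large, with probability at least 1 − e^{−c₄ n} the random n×m Toeplitz matrix H built from i.i.d. Rademacher inputs has the property: for every z ∈ ℝ^m with ‖z‖₂ = 1 and every subset K ⊆ {1,…,n} with |K| ≤ βn, Σ_{i∈K̄} |(Hz)_i| − Σ_{i∈K} |(Hz)_i| ≥ δ' n, where K̄ = {1,…,n} \ K. -/

import Mathlib

set_option maxHeartbeats 1000000


open MeasureTheory ProbabilityTheory Finset Filter

noncomputable section

/-- The `n × m` Toeplitz matrix built from the input sequence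
`h = (h_{-m+2}, …, h_n)`, reindexed as `h : Fin (n+m-1) → ℝ`;
the `(i,j)` entry (0-based) is the input with index `i + j`, which corresponds to
`H_{i,j} = h_{i-m+j}` in 1-based indexing. -/
def toeplitz (n m : ℕ) (h : Fin (n + m - 1) → ℝ) : Matrix (Fin n) (Fin m) ℝ :=
  fun i j => h ⟨i.1 + j.1, by have := i.2; have := j.2; omega⟩

/-- The ℓ¹ norm of a vector in `ℝ^k`. -/
def l1 {k : ℕ} (v : Fin k → ℝ) : ℝ := ∑ i, |v i|

/-- The Euclidean (ℓ²) norm of a vector in `ℝ^k`. -/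
def l2 {k : ℕ} (v : Fin k → ℝ) : ℝ := Real.sqrt (∑ i, (v i) ^ 2)

/-- The Rademacher measure on ℝ: values `+1` and `-1` with probability `1/2` each. -/
def radMeasure : Measure ℝ :=
  (2 : ENNReal)⁻¹ • Measure.dirac 1 + (2 : ENNReal)⁻¹ • Measure.dirac (-1)

/-- Product of `d` i.i.d. Rademacher measures on `ℝ^d`. -/
def radPi (d : ℕ) : Measure (Fin d → ℝ) := Measure.pi fun _ => radMeasure

open Classical in
/-- Number of nonzero entries of a vector. -/
def sparsity {k : ℕ} (v : Fin k → ℝ) : ℕ := (Finset.univ.filter fun i => v i ≠ 0).card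


def idx {n m : ℕ} (i : Fin n) (p : Fin m) : Fin (n + m - 1) :=
  ⟨i.1 + p.1, by have h1 := i.2; have h2 := p.2; omega⟩

def Spq {n m : ℕ} (p q : Fin m) (h : Fin (n + m - 1) → ℝ) : ℝ :=
  ∑ i : Fin n, h (idx i p) * h (idx i q)

lemma Spq_comm {n m : ℕ} (p q : Fin m) (h : Fin (n+m-1) → ℝ) : Spq p q h = Spq q p h := by
  rw [Spq, Spq]; exact Finset.sum_congr rfl fun i _ => mul_comm _ _


instance : IsProbabilityMeasure radMeasure := by
  constructor
  simp [radMeasure]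
  rw [ENNReal.inv_two_add_inv_two]

/-- The finite cube `{1,-1}^d`. -/
def cube (d : ℕ) : Finset (Fin d → ℝ) := Fintype.piFinset fun _ => ({1, -1} : Finset ℝ)

lemma mem_cube {d : ℕ} {s : Fin d → ℝ} : s ∈ cube d ↔ ∀ i, s i = 1 ∨ s i = -1 := by
  simp [cube, Fintype.mem_piFinset]

/-- The cube as a set. -/
def cubeS (d : ℕ) : Set (Fin d → ℝ) := {h | ∀ i, h i = 1 ∨ h i = -1}

lemma cubeS_eq (d : ℕ) : cubeS d = Set.univ.pi fun _ => ({1, -1} : Set ℝ) := by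
  ext h; simp [cubeS, Set.mem_pi]

lemma measurableSet_cubeS (d : ℕ) : MeasurableSet (cubeS d) := by
  rw [cubeS_eq]
  exact MeasurableSet.univ_pi fun i =>
    (measurableSet_singleton 1).union (measurableSet_singleton (-1))

lemma radMeasure_pair : radMeasure ({1, -1} : Set ℝ) = 1 := by
  simp [radMeasure, Measure.dirac_apply, Set.indicator]
  rw [ENNReal.inv_two_add_inv_two]

lemma radPi_cubeS (d : ℕ) : radPi d (cubeS d) = 1 := by
  rw [cubeS_eq, radPi, Measure.pi_pi]
  simp [radMeasure_pair]

lemma radPi_cubeS_compl (d : ℕ) : radPi d (cubeS d)ᶜ = 0 := by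
  have : IsProbabilityMeasure (radPi d) := by
    rw [radPi]; infer_instance
  rw [prob_compl_eq_one_sub (measurableSet_cubeS d), radPi_cubeS]
  simp

lemma radMeasure_single {x : ℝ} (hx : x = 1 ∨ x = -1) : radMeasure {x} = (2 : ENNReal)⁻¹ := by
  rcases hx with rfl | rfl <;>
    · simp [radMeasure, Measure.dirac_apply, Set.indicator]; norm_num

lemma radPi_singleton {d : ℕ} {s : Fin d → ℝ} (hs : s ∈ cube d) :
    radPi d {s} = ((2 : ENNReal) ^ d)⁻¹ := by
  rw [← Set.univ_pi_singleton s, radPi, Measure.pi_pi]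
  rw [mem_cube] at hs
  calc ∏ i : Fin d, radMeasure {s i} = ∏ _i : Fin d, (2 : ENNReal)⁻¹ := by
        exact Finset.prod_congr rfl fun i _ => radMeasure_single (hs i)
    _ = ((2 : ENNReal) ^ d)⁻¹ := by rw [Finset.prod_const, ← ENNReal.inv_pow]; simp

lemma radPi_le {d : ℕ} (P : (Fin d → ℝ) → Prop) [DecidablePred P] :
    radPi d {h | P h} ≤ (((cube d).filter P).card : ENNReal) * ((2 : ENNReal) ^ d)⁻¹ := by
  set A : Set (Fin d → ℝ) := {h | P h} with hA
  have h1 : A ⊆ (A ∩ cubeS d) ∪ (cubeS d)ᶜ := by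
    intro x hx; by_cases hc : x ∈ cubeS d
    · exact Or.inl ⟨hx, hc⟩
    · exact Or.inr hc
  calc radPi d A ≤ radPi d ((A ∩ cubeS d) ∪ (cubeS d)ᶜ) := measure_mono h1
    _ ≤ radPi d (A ∩ cubeS d) + radPi d (cubeS d)ᶜ := measure_union_le _ _
    _ = radPi d (A ∩ cubeS d) := by rw [radPi_cubeS_compl, add_zero]
    _ ≤ radPi d (⋃ s ∈ (cube d).filter P, {s}) := by
        apply measure_mono
        intro x ⟨hxA, hxc⟩
        simp only [Set.mem_iUnion, Set.mem_singleton_iff]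
        exact ⟨x, by simp only [Finset.mem_filter]; exact ⟨mem_cube.2 hxc, hxA⟩, rfl⟩
    _ ≤ ∑ s ∈ (cube d).filter P, radPi d {s} := measure_biUnion_finset_le _ _
    _ = (((cube d).filter P).card : ENNReal) * ((2 : ENNReal) ^ d)⁻¹ := by
        rw [Finset.sum_congr rfl fun s hs =>
          radPi_singleton (Finset.mem_filter.mp hs).1, Finset.sum_const, nsmul_eq_mul]


lemma sum_cube_prod {d : ℕ} (g : Fin d → ℝ → ℝ) :
    ∑ s ∈ cube d, ∏ i, g i (s i) = ∏ i, (g i 1 + g i (-1)) := by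
  rw [cube, ← Finset.prod_univ_sum]
  refine Finset.prod_congr rfl fun i _ => ?_
  rw [Finset.sum_pair (by norm_num : (1 : ℝ) ≠ -1)]

open Classical in
lemma chernoff_count {d L : ℕ} (a b : Fin L → Fin d) (σ : Fin L → ℝ)
    (hσ : ∀ l, σ l = 1 ∨ σ l = -1)
    (hab : Function.Injective (Sum.elim a b)) (u t : ℝ) (ht : 0 ≤ t) :
    (((cube d).filter fun s => u ≤ ∑ l, σ l * (s (a l) * s (b l))).card : ℝ) * Real.exp (t * u)
      ≤ 2 ^ d * Real.cosh t ^ L := by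
  have hbinj : Function.Injective b := fun l l' h => by
    have := hab (a₁ := Sum.inr l) (a₂ := Sum.inr l') (by simpa using h); simpa using this
  have hainj : Function.Injective a := fun l l' h => by
    have := hab (a₁ := Sum.inl l) (a₂ := Sum.inl l') (by simpa using h); simpa using this
  have hanb : ∀ l l', a l ≠ b l' := fun l l' h => by
    have := hab (a₁ := Sum.inl l) (a₂ := Sum.inr l') (by simpa using h); simp at this
  -- the involution
  set Φ : (Fin d → ℝ) → (Fin d → ℝ) :=
    fun s i => if h : ∃ l, b l = i then σ h.choose * s (a h.choose) * s i else s i with hΦ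
  have hΦb : ∀ s l, Φ s (b l) = σ l * s (a l) * s (b l) := by
    intro s l
    have hex : ∃ l', b l' = b l := ⟨l, rfl⟩
    have hch : hex.choose = l := hbinj hex.choose_spec
    simp only [hΦ, dif_pos hex, hch]
  have hΦa : ∀ s l, Φ s (a l) = s (a l) := by
    intro s l
    have hnex : ¬ ∃ l', b l' = a l := fun ⟨l', hl'⟩ => hanb l l' hl'.symm
    simp only [hΦ, dif_neg hnex]
  have hΦn : ∀ s i, (¬ ∃ l, b l = i) → Φ s i = s i := by
    intro s i hi; simp only [hΦ, dif_neg hi]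
  have hΦmem : ∀ s ∈ cube d, Φ s ∈ cube d := by
    intro s hs
    rw [mem_cube] at hs ⊢
    intro i
    by_cases hex : ∃ l, b l = i
    · obtain ⟨l, rfl⟩ := hex
      rw [hΦb]
      rcases hσ l with h1 | h1 <;> rcases hs (a l) with h2 | h2 <;> rcases hs (b l) with h3 | h3 <;>
        rw [h1, h2, h3] <;> norm_num
    · rw [hΦn s i hex]; exact hs i
  have hΦΦ : ∀ s ∈ cube d, Φ (Φ s) = s := by
    intro s hs
    rw [mem_cube] at hs
    funext i
    by_cases hex : ∃ l, b l = i
    · obtain ⟨l, rfl⟩ := hex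
      rw [hΦb, hΦa, hΦb]
      rcases hσ l with h1 | h1 <;> rcases hs (a l) with h2 | h2 <;>
        rw [h1, h2] <;> ring
    · rw [hΦn _ _ hex, hΦn _ _ hex]
  -- step 1 : Markov
  have step1 : (((cube d).filter fun s => u ≤ ∑ l, σ l * (s (a l) * s (b l))).card : ℝ)
      * Real.exp (t * u) ≤ ∑ s ∈ cube d, ∏ l, Real.exp (t * (σ l * (s (a l) * s (b l)))) := by
    rw [← nsmul_eq_mul, ← Finset.sum_const]
    have : ∀ s ∈ (cube d).filter fun s => u ≤ ∑ l, σ l * (s (a l) * s (b l)),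
        Real.exp (t * u) ≤ ∏ l, Real.exp (t * (σ l * (s (a l) * s (b l)))) := by
      intro s hs
      rw [Finset.mem_filter] at hs
      rw [← Real.exp_sum]
      apply Real.exp_le_exp.2
      rw [← Finset.mul_sum]
      exact mul_le_mul_of_nonneg_left hs.2 ht
    calc ∑ s ∈ (cube d).filter fun s => u ≤ ∑ l, σ l * (s (a l) * s (b l)), Real.exp (t*u)
        ≤ ∑ s ∈ (cube d).filter fun s => u ≤ ∑ l, σ l * (s (a l) * s (b l)),
            ∏ l, Real.exp (t * (σ l * (s (a l) * s (b l)))) := Finset.sum_le_sum this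
      _ ≤ ∑ s ∈ cube d, ∏ l, Real.exp (t * (σ l * (s (a l) * s (b l)))) := by
          apply Finset.sum_le_sum_of_subset_of_nonneg (Finset.filter_subset _ _)
          intro s _ _
          exact Finset.prod_nonneg fun l _ => (Real.exp_pos _).le
  -- step 2 : change of variables
  have step2 : ∑ s ∈ cube d, ∏ l, Real.exp (t * (σ l * (s (a l) * s (b l))))
      = ∑ s ∈ cube d, ∏ l, Real.exp (t * s (b l)) := by
    apply Finset.sum_nbij' Φ Φ hΦmem hΦmem hΦΦ hΦΦ
    intro s hs
    refine Finset.prod_congr rfl fun l _ => ?_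
    rw [hΦb]; ring_nf
  -- step 3 : factorization
  have hcard : (Finset.univ.filter (· ∈ Finset.image b Finset.univ)).card = L := by
    rw [Finset.filter_mem_eq_inter, Finset.univ_inter, Finset.card_image_of_injective _ hbinj,
      Finset.card_univ, Fintype.card_fin]
  have hcard2 : (Finset.univ.filter (¬ · ∈ Finset.image b Finset.univ)).card = d - L := by
    have := Finset.card_filter_add_card_filter_not
      (s := (Finset.univ : Finset (Fin d))) (p := (· ∈ Finset.image b Finset.univ))
    rw [hcard] at this
    simp only [Finset.card_univ, Fintype.card_fin] at this
    omega
  have step3 : ∑ s ∈ cube d, ∏ l, Real.exp (t * s (b l))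
      = 2 ^ (d - L) * (2 * Real.cosh t) ^ L := by
    have key := sum_cube_prod (d := d)
      (fun i x => if i ∈ Finset.image b Finset.univ then Real.exp (t * x) else 1)
    calc ∑ s ∈ cube d, ∏ l, Real.exp (t * s (b l))
        = ∑ s ∈ cube d, ∏ i, (if i ∈ Finset.image b Finset.univ then Real.exp (t * s i) else 1) := by
          refine Finset.sum_congr rfl fun s _ => ?_
          rw [Finset.prod_ite_mem, Finset.univ_inter,
            Finset.prod_image (fun l _ l' _ h => hbinj h)]
      _ = ∏ i, ((if i ∈ Finset.image b Finset.univ then Real.exp (t * 1) else 1)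
            + (if i ∈ Finset.image b Finset.univ then Real.exp (t * (-1)) else 1)) := key
      _ = ∏ i, (if i ∈ Finset.image b Finset.univ then Real.exp (t*1) + Real.exp (t*(-1))
            else (2:ℝ)) := by
          refine Finset.prod_congr rfl fun i _ => ?_
          by_cases hi : i ∈ Finset.image b Finset.univ <;> simp [hi] <;> norm_num
      _ = (Real.exp (t*1) + Real.exp (t*(-1)))^L * 2^(d-L) := by
          rw [Finset.prod_ite (f := fun _ => Real.exp (t*1) + Real.exp (t*(-1)))
            (g := fun _ => (2:ℝ)), Finset.prod_const, Finset.prod_const, hcard, hcard2]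
      _ = 2 ^ (d - L) * (2 * Real.cosh t) ^ L := by
          rw [Real.cosh_eq, mul_one, mul_neg_one]; ring
  have hLd : L ≤ d := by
    have : (Finset.image b Finset.univ).card = L := by
      rw [Finset.card_image_of_injective _ hbinj, Finset.card_univ, Fintype.card_fin]
    rw [← this]
    exact (Finset.card_le_card (Finset.subset_univ _)).trans (by simp)
  calc (((cube d).filter fun s => u ≤ ∑ l, σ l * (s (a l) * s (b l))).card : ℝ) * Real.exp (t * u)
      ≤ 2 ^ (d - L) * (2 * Real.cosh t) ^ L := by rw [← step3, ← step2]; exact step1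
    _ = 2 ^ d * Real.cosh t ^ L := by
        rw [mul_pow, ← mul_assoc, ← pow_add]
        congr 2
        omega


open Classical in
lemma Spq_tail_lt {n m : ℕ} (hmn : m ≤ n) (p q : Fin m) (hlt : p.1 < q.1) :
    ((((cube (n+m-1)).filter fun s => ¬ |Spq p q s| ≤ 1/(2*(m:ℝ)) * n).card) : ℝ)
      ≤ 4 * m * (2 ^ (n+m-1) * Real.exp (-(1/(4*(m:ℝ)^2))^2 * n / 2)) := by
  have hm : 1 ≤ m := by have := q.2; omega
  set d := n + m - 1 with hd
  set k : ℕ := q.1 - p.1 with hk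
  have hk1 : 1 ≤ k := by omega
  have hkm : k < m := by have := q.2; omega
  set ε : ℝ := 1/(2*(m:ℝ)) with hε
  set ε' : ℝ := 1/(4*(m:ℝ)^2) with hε'
  have hmpos : (0:ℝ) < m := by exact_mod_cast hm
  have hε'pos : 0 < ε' := by positivity
  set u : ℝ := ε * n / (2*k) with hu
  -- classes
  set C : ℕ → Finset (Fin n) := fun r => univ.filter (fun i : Fin n => i.1 % (2*k) = r) with hC
  set T : ℕ → (Fin d → ℝ) → ℝ :=
    fun r s => ∑ i ∈ C r, s (idx i p) * s (idx i q) with hT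
  have hsplit : ∀ s, Spq p q s = ∑ r ∈ range (2*k), T r s := by
    intro s
    rw [Spq]
    rw [← Finset.sum_fiberwise_of_maps_to (t := range (2*k)) (g := fun i : Fin n => i.1 % (2*k))
      (fun i _ => Finset.mem_range.2 (Nat.mod_lt _ (by omega)))]
  -- events
  set Ev : ℕ → ℝ → Finset (Fin d → ℝ) := fun r σv =>
    (cube d).filter fun s => u ≤ ∑ l : Fin (C r).card,
      σv * (s (idx ((((C r).equivFin).symm l) : Fin n) p)
        * s (idx ((((C r).equivFin).symm l) : Fin n) q)) with hEv
  -- bad set is inside union of events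
  have hsub : ((cube d).filter fun s => ¬ |Spq p q s| ≤ ε * n)
      ⊆ (range (2*k)).biUnion (fun r => Ev r 1 ∪ Ev r (-1)) := by
    intro s hs
    rw [Finset.mem_filter] at hs
    obtain ⟨hscube, hsbad⟩ := hs
    have hex : ∃ r ∈ range (2*k), u ≤ |T r s| := by
      by_contra hcon
      push_neg at hcon
      apply hsbad
      calc |Spq p q s| = |∑ r ∈ range (2*k), T r s| := by rw [hsplit]
        _ ≤ ∑ r ∈ range (2*k), |T r s| := Finset.abs_sum_le_sum_abs _ _
        _ ≤ ∑ _r ∈ range (2*k), u := Finset.sum_le_sum (fun r hr => (hcon r hr).le)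
        _ = 2*k * u := by rw [Finset.sum_const, Finset.card_range, nsmul_eq_mul]; push_cast; ring
        _ = ε * n := by
            rw [hu]; field_simp
    obtain ⟨r, hr, hru⟩ := hex
    refine Finset.mem_biUnion.2 ⟨r, hr, ?_⟩
    have hTsum : ∀ σv : ℝ, ∑ l : Fin (C r).card,
        σv * (s (idx ((((C r).equivFin).symm l) : Fin n) p)
          * s (idx ((((C r).equivFin).symm l) : Fin n) q)) = σv * T r s := by
      intro σv
      have hTr : T r s = ∑ l : Fin (C r).card,
          s (idx ((((C r).equivFin).symm l) : Fin n) p)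
            * s (idx ((((C r).equivFin).symm l) : Fin n) q) := by
        simp only [hT]
        rw [← Finset.sum_coe_sort (C r) (fun i => s (idx i p) * s (idx i q))]
        exact (Equiv.sum_comp ((C r).equivFin).symm
          (fun x => s (idx (x : Fin n) p) * s (idx (x : Fin n) q))).symm
      rw [hTr, ← Finset.mul_sum]
    rcases le_abs.1 hru with hcase | hcase
    · refine Finset.mem_union_left _ (Finset.mem_filter.2 ⟨hscube, ?_⟩)
      rw [hTsum 1, one_mul]; exact hcase
    · refine Finset.mem_union_right _ (Finset.mem_filter.2 ⟨hscube, ?_⟩)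
      rw [hTsum (-1)]; linarith
  -- per-event bound via chernoff
  have hLle : ∀ r, (C r).card ≤ n := fun r =>
    (Finset.card_le_card (Finset.subset_univ _)).trans (by simp)
  have hEvcard : ∀ r σv, (σv = 1 ∨ σv = -1) → ((Ev r σv).card : ℝ)
      ≤ 2 ^ d * Real.exp (-(ε'^2) * n / 2) := by
    intro r σv hσv
    set L := (C r).card with hL
    set e : Fin L → Fin n := fun l => ((((C r).equivFin).symm l) : Fin n) with he
    have hemem : ∀ l, e l ∈ C r := fun l => (((C r).equivFin).symm l).2
    have hemod : ∀ l, (e l).1 % (2*k) = r := by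
      intro l
      have := hemem l
      rw [hC, Finset.mem_filter] at this
      exact this.2
    have heinj : Function.Injective e := by
      intro l l' hll
      have : (((C r).equivFin).symm l) = (((C r).equivFin).symm l') := Subtype.ext hll
      exact (((C r).equivFin).symm).injective this
    have hab : Function.Injective
        (Sum.elim (fun l => idx (e l) p) (fun l => idx (e l) q)) := by
      intro x y hxy
      have keylem : ∀ l l' : Fin L, (idx (e l) p : Fin d) ≠ idx (e l') q := by
        intro l l' hle
        have hval : (e l).1 + p.1 = (e l').1 + q.1 := congrArg Fin.val hle
        have h1 : (e l).1 % (2*k) = r := hemod l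
        have h2 : (e l').1 % (2*k) = r := hemod l'
        have heq : (e l).1 = (e l').1 + k := by omega
        have hmodeq : Nat.ModEq (2*k) ((e l').1 + k) ((e l').1 + 0) := by
          unfold Nat.ModEq
          rw [Nat.add_zero, ← heq, h1, h2]
        have : Nat.ModEq (2*k) k 0 := Nat.ModEq.add_left_cancel' _ hmodeq
        have hdvd : (2*k) ∣ k := (Nat.modEq_zero_iff_dvd).1 this
        have := Nat.le_of_dvd (by omega) hdvd
        omega
      match x, y with
      | Sum.inl l, Sum.inl l' =>
        simp only [Sum.elim_inl] at hxy
        have : (e l).1 = (e l').1 := by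
          have := congrArg Fin.val hxy
          simp only [idx] at this
          omega
        rw [heinj (Fin.ext this)]
      | Sum.inr l, Sum.inr l' =>
        simp only [Sum.elim_inr] at hxy
        have : (e l).1 = (e l').1 := by
          have := congrArg Fin.val hxy
          simp only [idx] at this
          omega
        rw [heinj (Fin.ext this)]
      | Sum.inl l, Sum.inr l' =>
        exact absurd hxy (by simpa using keylem l l')
      | Sum.inr l, Sum.inl l' =>
        exact absurd hxy (by simpa using (keylem l' l).symm)
    have hcc := chernoff_count (fun l => idx (e l) p) (fun l => idx (e l) q)
      (fun _ => σv) (fun _ => hσv) hab u ε' hε'pos.le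
    have hEveq : Ev r σv = (cube d).filter fun s => u ≤ ∑ l : Fin L,
        (fun _ : Fin L => σv) l * (s ((fun l => idx (e l) p) l) * s ((fun l => idx (e l) q) l)) := rfl
    rw [hEveq]
    have hexp_pos : 0 < Real.exp (ε' * u) := Real.exp_pos _
    rw [← le_div_iff₀ hexp_pos] at hcc
    refine hcc.trans ?_
    rw [div_eq_mul_inv, ← Real.exp_neg, mul_assoc]
    apply mul_le_mul_of_nonneg_left _ (by positivity)
    -- cosh^L * exp(-ε'u) ≤ exp(-ε'²n/2)
    have h1 : Real.cosh ε' ^ L ≤ Real.exp (ε'^2/2 * n) := by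
      calc Real.cosh ε' ^ L ≤ Real.exp (ε'^2/2) ^ L :=
            pow_le_pow_left₀ ((Real.cosh_pos _).le) (Real.cosh_le_exp_half_sq ε') L
        _ = Real.exp (ε'^2/2 * L) := by rw [← Real.exp_nat_mul]; ring_nf
        _ ≤ Real.exp (ε'^2/2 * n) := by
            apply Real.exp_le_exp.2
            apply mul_le_mul_of_nonneg_left _ (by positivity)
            exact_mod_cast hLle r
    have hkpos : (0:ℝ) < (k:ℝ) := by exact_mod_cast hk1
    have hk' : (k:ℝ) ≤ (m:ℝ) := by exact_mod_cast hkm.le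
    have hnn : (0:ℝ) ≤ (n:ℝ) := Nat.cast_nonneg n
    have hεn : ε' * n ≤ u := by
      rw [hu, hε, hε', le_div_iff₀ (by positivity : (0:ℝ) < 2*(k:ℝ))]
      have expand : 1 / (4 * (m:ℝ) ^ 2) * ↑n * (2 * ↑k) = (n * (2*k)) / (4*m^2) := by ring
      have expand2 : 1 / (2 * (m:ℝ)) * ↑n = (n * (2*m)) / (4 * m^2) := by
        field_simp; ring
      rw [expand, expand2, div_le_div_iff₀ (by positivity) (by positivity)]
      nlinarith [mul_le_mul_of_nonneg_left hk' (by positivity : (0:ℝ) ≤ 2*n)]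
    have h2 : ε' ^ 2 * n ≤ ε' * u := by
      calc ε' ^ 2 * (n:ℝ) = ε' * (ε' * n) := by ring
        _ ≤ ε' * u := mul_le_mul_of_nonneg_left hεn hε'pos.le
    calc Real.cosh ε' ^ L * Real.exp (-(ε' * u))
        ≤ Real.exp (ε'^2/2 * n) * Real.exp (-(ε'^2 * n)) := by
          apply mul_le_mul h1 (Real.exp_le_exp.2 (by linarith)) (Real.exp_pos _).le
            (Real.exp_pos _).le
      _ = Real.exp (-(ε'^2) * n / 2) := by rw [← Real.exp_add]; ring_nf
  -- assemble
  calc ((((cube d).filter fun s => ¬ |Spq p q s| ≤ ε * n).card) : ℝ)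
      ≤ (((range (2*k)).biUnion (fun r => Ev r 1 ∪ Ev r (-1))).card : ℝ) := by
        exact_mod_cast Finset.card_le_card hsub
    _ ≤ ∑ r ∈ range (2*k), ((Ev r 1 ∪ Ev r (-1)).card : ℝ) := by
        exact_mod_cast Finset.card_biUnion_le
    _ ≤ ∑ r ∈ range (2*k), (((Ev r 1).card : ℝ) + ((Ev r (-1)).card : ℝ)) := by
        refine Finset.sum_le_sum fun r _ => ?_
        exact_mod_cast Finset.card_union_le _ _
    _ ≤ ∑ _r ∈ range (2*k), (2 * (2 ^ d * Real.exp (-(ε'^2) * n / 2))) := by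
        refine Finset.sum_le_sum fun r _ => ?_
        have := hEvcard r 1 (Or.inl rfl)
        have := hEvcard r (-1) (Or.inr rfl)
        linarith
    _ = 2*k * (2 * (2 ^ d * Real.exp (-(ε'^2) * n / 2))) := by
        rw [Finset.sum_const, Finset.card_range, nsmul_eq_mul]; push_cast; ring
    _ ≤ 4 * m * (2 ^ d * Real.exp (-(ε'^2) * n / 2)) := by
        have hkm' : (k:ℝ) ≤ m := by exact_mod_cast hkm.le
        have hpos : (0:ℝ) < 2 ^ d * Real.exp (-(ε'^2) * n / 2) := by positivity
        nlinarith


lemma deterministic {n m : ℕ} (hm : 1 ≤ m) (hmn : m ≤ n)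
    (h : Fin (n + m - 1) → ℝ) (hcube : ∀ i, h i = 1 ∨ h i = -1)
    (hS : ∀ p q : Fin m, p ≠ q → |Spq p q h| ≤ 1/(2*(m:ℝ)) * n)
    (z : Fin m → ℝ) (hz : l2 z = 1) (K : Finset (Fin n))
    (hK : (K.card : ℝ) ≤ 1/(16*(m:ℝ)^2) * n) :
    1/(4*(m:ℝ)) * n ≤ ∑ i ∈ Kᶜ, |(toeplitz n m h).mulVec z i|
      - ∑ i ∈ K, |(toeplitz n m h).mulVec z i| := by
  have hmpos : (0:ℝ) < m := by exact_mod_cast hm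
  rw [l2] at hz
  have hz2 : ∑ j, z j ^ 2 = 1 := Real.sqrt_eq_one.mp hz
  have habs : ∀ i, |h i| = 1 := fun i => by rcases hcube i with h1 | h1 <;> rw [h1] <;> norm_num
  set v : Fin n → ℝ := (toeplitz n m h).mulVec z with hv
  have hvi : ∀ i, v i = ∑ j, h (idx i j) * z j := fun i => rfl
  set M : ℝ := ∑ j, |z j| with hM
  have hMnn : 0 ≤ M := Finset.sum_nonneg fun j _ => abs_nonneg _
  have hM2 : M^2 ≤ m := by
    have hcs := Finset.sum_mul_sq_le_sq_mul_sq univ (fun _ => (1:ℝ)) (fun j => |z j|)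
    simp only [one_mul, one_pow, sq_abs, Finset.sum_const, Finset.card_univ,
      Fintype.card_fin, nsmul_eq_mul, mul_one] at hcs
    rw [hz2, mul_one] at hcs
    exact hcs
  have hM21 : 1 ≤ M * M := by
    rw [← hz2]
    calc ∑ j, z j ^ 2 = ∑ j, |z j| * |z j| := by
          refine Finset.sum_congr rfl fun j _ => ?_
          rw [← sq_abs]; ring
      _ ≤ ∑ j, |z j| * M :=
          Finset.sum_le_sum fun j _ => mul_le_mul_of_nonneg_left
            (Finset.single_le_sum (fun i _ => abs_nonneg (z i)) (Finset.mem_univ j))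
            (abs_nonneg _)
      _ = M * M := by rw [← Finset.sum_mul]
  have hMle : M ≤ m := by nlinarith
  have hvle : ∀ i, |v i| ≤ M := by
    intro i
    rw [hvi i]
    calc |∑ j, h (idx i j) * z j| ≤ ∑ j, |h (idx i j) * z j| := Finset.abs_sum_le_sum_abs _ _
      _ = ∑ j, |z j| := Finset.sum_congr rfl fun j _ => by rw [abs_mul, habs, one_mul]
  set Q : ℝ := ∑ i, v i ^ 2 with hQ
  have hQexp : Q = ∑ pj : Fin m, ∑ qj : Fin m, z pj * z qj * Spq pj qj h := by
    rw [hQ]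
    have hterm : ∀ i, v i ^ 2 = ∑ pj, ∑ qj, z pj * z qj * (h (idx i pj) * h (idx i qj)) := by
      intro i
      rw [hvi i, sq, Finset.sum_mul_sum]
      exact Finset.sum_congr rfl fun pj _ => Finset.sum_congr rfl fun qj _ => by ring
    rw [Finset.sum_congr rfl fun i _ => hterm i, Finset.sum_comm]
    refine Finset.sum_congr rfl fun pj _ => ?_
    rw [Finset.sum_comm]
    refine Finset.sum_congr rfl fun qj _ => ?_
    rw [Spq, Finset.mul_sum]
  have hSpp : ∀ pj : Fin m, Spq pj pj h = n := by
    intro pj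
    rw [Spq]
    have hone : ∀ i : Fin n, h (idx i pj) * h (idx i pj) = 1 := fun i => by
      rcases hcube (idx i pj) with h1 | h1 <;> rw [h1] <;> norm_num
    rw [Finset.sum_congr rfl fun i _ => hone i, Finset.sum_const, Finset.card_univ,
      Fintype.card_fin, nsmul_eq_mul, mul_one]
  have hQn : |Q - n| ≤ 1/(2*(m:ℝ)) * n * (M*M) := by
    have hQsplit : Q - n = ∑ pj, ∑ qj ∈ univ.erase pj, z pj * z qj * Spq pj qj h := by
      rw [hQexp]
      have hrow : ∀ pj : Fin m, ∑ qj, z pj * z qj * Spq pj qj h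
          = z pj * z pj * n + ∑ qj ∈ univ.erase pj, z pj * z qj * Spq pj qj h := by
        intro pj
        rw [← Finset.add_sum_erase _ _ (Finset.mem_univ pj), hSpp pj]
      rw [Finset.sum_congr rfl fun pj _ => hrow pj, Finset.sum_add_distrib]
      have hdiag : ∑ pj, z pj * z pj * (n:ℝ) = n := by
        rw [← Finset.sum_mul]
        rw [Finset.sum_congr rfl (fun pj _ => by rw [← sq (z pj)] : ∀ pj ∈ univ, z pj * z pj = z pj ^ 2)]
        rw [hz2, one_mul]
      rw [hdiag]; ring
    rw [hQsplit]
    calc |∑ pj, ∑ qj ∈ univ.erase pj, z pj * z qj * Spq pj qj h|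
        ≤ ∑ pj, |∑ qj ∈ univ.erase pj, z pj * z qj * Spq pj qj h| :=
          Finset.abs_sum_le_sum_abs _ _
      _ ≤ ∑ pj, ∑ qj ∈ univ.erase pj, |z pj| * |z qj| * (1/(2*(m:ℝ)) * n) := by
          refine Finset.sum_le_sum fun pj _ => ?_
          refine (Finset.abs_sum_le_sum_abs _ _).trans ?_
          refine Finset.sum_le_sum fun qj hqj => ?_
          rw [abs_mul, abs_mul]
          exact mul_le_mul_of_nonneg_left
            (hS pj qj (Ne.symm (Finset.ne_of_mem_erase hqj))) (by positivity)
      _ ≤ ∑ pj, ∑ qj, |z pj| * |z qj| * (1/(2*(m:ℝ)) * n) := by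
          refine Finset.sum_le_sum fun pj _ => ?_
          refine Finset.sum_le_sum_of_subset_of_nonneg (Finset.erase_subset _ _) ?_
          intro qj _ _; positivity
      _ = 1/(2*(m:ℝ)) * n * (M*M) := by
          rw [hM, Finset.sum_mul_sum, Finset.mul_sum]
          refine Finset.sum_congr rfl fun pj _ => ?_
          rw [Finset.mul_sum]
          exact Finset.sum_congr rfl fun qj _ => by ring
  have hQlb : (n:ℝ)/2 ≤ Q := by
    have h1 : 1/(2*(m:ℝ)) * n * (M*M) ≤ 1/(2*(m:ℝ)) * n * m := by
      apply mul_le_mul_of_nonneg_left _ (by positivity)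
      nlinarith
    have h2 := (abs_le.mp hQn).1
    have h3 : 1/(2*(m:ℝ)) * n * m = n/2 := by field_simp
    linarith
  set T : ℝ := ∑ i, |v i| with hTdef
  have hTnn : 0 ≤ T := Finset.sum_nonneg fun i _ => abs_nonneg _
  have hQT : Q ≤ M * T := by
    rw [hQ, hTdef, Finset.mul_sum]
    refine Finset.sum_le_sum fun i _ => ?_
    rw [← sq_abs, sq]
    exact mul_le_mul_of_nonneg_right (hvle i) (abs_nonneg _)
  set SK : ℝ := ∑ i ∈ K, |v i| with hSK
  have hTK : SK ≤ (K.card : ℝ) * M := by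
    rw [hSK]
    calc ∑ i ∈ K, |v i| ≤ ∑ _i ∈ K, M := Finset.sum_le_sum fun i _ => hvle i
      _ = K.card * M := by rw [Finset.sum_const, nsmul_eq_mul]
  have hKM : SK ≤ (1/(16*(m:ℝ)^2) * n) * m :=
    hTK.trans (mul_le_mul hK hMle hMnn (by positivity))
  have hsplitKT : ∑ i ∈ Kᶜ, |v i| = T - SK := by
    rw [hTdef, hSK, ← Finset.sum_add_sum_compl K (fun i => |v i|)]; ring
  rw [hsplitKT]
  have hmT : (n:ℝ)/2 ≤ m * T := by
    calc (n:ℝ)/2 ≤ Q := hQlb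
      _ ≤ M * T := hQT
      _ ≤ m * T := mul_le_mul_of_nonneg_right hMle hTnn
  have hmSK : (m:ℝ) * SK ≤ n/16 := by
    have h5 := mul_le_mul_of_nonneg_left hKM hmpos.le
    have h6 : (m:ℝ) * ((1/(16*(m:ℝ)^2) * n) * m) = n/16 := by field_simp
    linarith
  have heq : 1/(4*(m:ℝ)) * n = n/(4*m) := by ring
  rw [heq, div_le_iff₀ (by positivity)]
  nlinarith


open Classical in
lemma Spq_tail {n m : ℕ} (hmn : m ≤ n) (p q : Fin m) (hpq : p ≠ q) :
    ((((cube (n+m-1)).filter fun s => ¬ |Spq p q s| ≤ 1/(2*(m:ℝ)) * n).card) : ℝ)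
      ≤ 4 * m * (2 ^ (n+m-1) * Real.exp (-(1/(4*(m:ℝ)^2))^2 * n / 2)) := by
  have hv : p.1 ≠ q.1 := fun hv => hpq (Fin.ext hv)
  rcases lt_or_gt_of_ne hv with hlt | hlt
  · exact Spq_tail_lt hmn p q hlt
  · have hfe : ((cube (n+m-1)).filter fun s => ¬ |Spq p q s| ≤ 1/(2*(m:ℝ)) * n)
        = ((cube (n+m-1)).filter fun s => ¬ |Spq q p s| ≤ 1/(2*(m:ℝ)) * n) := by
      refine Finset.filter_congr fun s _ => by rw [Spq_comm]
    rw [hfe]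
    exact Spq_tail_lt hmn q p hlt

/-- For fixed `m ≥ 1` there exist constants `c₄, β, δ' > 0` such that,
with probability at least `1 - e^{-c₄ n}` for large `n ≥ m`, the Rademacher Toeplitz
matrix satisfies: for every unit vector `z` and every subset `K` with `|K| ≤ βn`,
`∑_{i∈K̄}|(Hz)_i| - ∑_{i∈K}|(Hz)_i| ≥ δ'·n`. -/
theorem stmt12 (m : ℕ) (hm : 1 ≤ m) :
    ∃ c₄ : ℝ, 0 < c₄ ∧ ∃ β : ℝ, 0 < β ∧ ∃ δ' : ℝ, 0 < δ' ∧
      ∃ N : ℕ, ∀ n : ℕ, N ≤ n → m ≤ n →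
        ENNReal.ofReal (1 - Real.exp (-c₄ * n)) ≤
          radPi (n + m - 1)
            {h | ∀ z : Fin m → ℝ, l2 z = 1 →
              ∀ K : Finset (Fin n), (K.card : ℝ) ≤ β * n →
                δ' * (n : ℝ) ≤
                  ∑ i ∈ Kᶜ, |(toeplitz n m h).mulVec z i| -
                    ∑ i ∈ K, |(toeplitz n m h).mulVec z i|} := by
  classical
  have hmpos : (0:ℝ) < m := by exact_mod_cast hm
  refine ⟨1/(64*(m:ℝ)^4), by positivity, 1/(16*(m:ℝ)^2), by positivity,
    1/(4*(m:ℝ)), by positivity, ⌈(64*(m:ℝ)^4) * Real.log (4*(m:ℝ)^3)⌉₊, ?_⟩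
  intro n hN hmn
  set d := n + m - 1 with hd
  set G' : Set (Fin d → ℝ) := cubeS d ∩ ⋂ (p : Fin m) (q : Fin m),
    {h | p = q ∨ |Spq p q h| ≤ 1/(2*(m:ℝ)) * n} with hG'
  haveI hprob : IsProbabilityMeasure (radPi d) := by unfold radPi; infer_instance
  -- measurability
  have hSpqMeas : ∀ p q : Fin m, Measurable fun h : Fin d → ℝ => Spq p q h := by
    intro p q
    apply Finset.measurable_sum
    intro i _
    exact (measurable_pi_apply _).mul (measurable_pi_apply _)
  have hmeasG' : MeasurableSet G' := by
    refine (measurableSet_cubeS d).inter ?_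
    refine MeasurableSet.iInter fun p => MeasurableSet.iInter fun q => ?_
    by_cases hpq : p = q
    · have huniv : {h : Fin d → ℝ | p = q ∨ |Spq p q h| ≤ 1/(2*(m:ℝ)) * n} = Set.univ := by
        ext h; simp [hpq]
      rw [huniv]; exact MeasurableSet.univ
    · have heq2 : {h : Fin d → ℝ | p = q ∨ |Spq p q h| ≤ 1/(2*(m:ℝ)) * n}
          = {h : Fin d → ℝ | |Spq p q h| ≤ 1/(2*(m:ℝ)) * n} := by
        ext h; simp [hpq]
      rw [heq2]
      exact measurableSet_le (hSpqMeas p q).abs measurable_const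
  -- G' is contained in the good set
  have hsubG : G' ⊆ {h : Fin d → ℝ | ∀ z : Fin m → ℝ, l2 z = 1 →
      ∀ K : Finset (Fin n), (K.card : ℝ) ≤ 1/(16*(m:ℝ)^2) * n →
        1/(4*(m:ℝ)) * (n : ℝ) ≤
          ∑ i ∈ Kᶜ, |(toeplitz n m h).mulVec z i| -
            ∑ i ∈ K, |(toeplitz n m h).mulVec z i|} := by
    intro h hh
    obtain ⟨hhc, hhS⟩ := hh
    simp only [Set.mem_iInter, Set.mem_setOf_eq] at hhS
    intro z hz K hK
    refine deterministic hm hmn h hhc ?_ z hz K hK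
    intro p q hpq
    rcases hhS p q with heq | hle
    · exact absurd heq hpq
    · exact hle
  -- complement bound
  have hpair : ∀ p q : Fin m, radPi d {h : Fin d → ℝ | p = q ∨ |Spq p q h| ≤ 1/(2*(m:ℝ)) * n}ᶜ
      ≤ ENNReal.ofReal (4 * m * Real.exp (-(1/(4*(m:ℝ)^2))^2 * n / 2)) := by
    intro p q
    by_cases hpq : p = q
    · have hempty : {h : Fin d → ℝ | p = q ∨ |Spq p q h| ≤ 1/(2*(m:ℝ)) * n}ᶜ = ∅ := by
        ext h; simp [hpq]
      rw [hempty]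
      simp
    · have hsub2 : {h : Fin d → ℝ | p = q ∨ |Spq p q h| ≤ 1/(2*(m:ℝ)) * n}ᶜ
          ⊆ {h : Fin d → ℝ | ¬ |Spq p q h| ≤ 1/(2*(m:ℝ)) * n} := by
        intro h hh
        simp only [Set.mem_compl_iff, Set.mem_setOf_eq] at hh ⊢
        tauto
      have hcard := Spq_tail hmn p q hpq
      have h2d0 : ((2:ENNReal)^d) ≠ 0 := by
        exact pow_ne_zero _ (by norm_num)
      have h2dtop : ((2:ENNReal)^d) ≠ ⊤ := by
        exact ENNReal.pow_ne_top (by norm_num)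
      calc radPi d {h : Fin d → ℝ | p = q ∨ |Spq p q h| ≤ 1/(2*(m:ℝ)) * n}ᶜ
          ≤ radPi d {h : Fin d → ℝ | ¬ |Spq p q h| ≤ 1/(2*(m:ℝ)) * n} := measure_mono hsub2
        _ ≤ (((cube d).filter
              (fun s => ¬ |Spq p q s| ≤ 1/(2*(m:ℝ)) * n)).card : ENNReal)
              * ((2 : ENNReal) ^ d)⁻¹ := radPi_le _
        _ ≤ ENNReal.ofReal ((2:ℝ)^d * (4 * m * Real.exp (-(1/(4*(m:ℝ)^2))^2 * n / 2)))
              * ((2 : ENNReal) ^ d)⁻¹ := by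
            apply mul_le_mul_left
            rw [← ENNReal.ofReal_natCast]
            apply ENNReal.ofReal_le_ofReal
            calc (((cube d).filter fun s => ¬ |Spq p q s| ≤ 1/(2*(m:ℝ)) * n).card : ℝ)
                ≤ 4 * m * (2 ^ (n+m-1) * Real.exp (-(1/(4*(m:ℝ)^2))^2 * n / 2)) := hcard
              _ = (2:ℝ)^d * (4 * m * Real.exp (-(1/(4*(m:ℝ)^2))^2 * n / 2)) := by
                  rw [hd]; ring
        _ = ENNReal.ofReal (4 * m * Real.exp (-(1/(4*(m:ℝ)^2))^2 * n / 2)) := by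
            rw [ENNReal.ofReal_mul (by positivity)]
            have h2de : ENNReal.ofReal ((2:ℝ)^d) = (2:ENNReal)^d := by
              rw [ENNReal.ofReal_pow (by norm_num)]
              norm_num
            rw [h2de, mul_right_comm, ENNReal.mul_inv_cancel h2d0 h2dtop, one_mul]
  have hcompl : radPi d G'ᶜ
      ≤ ENNReal.ofReal ((m:ℝ) * m * (4 * m * Real.exp (-(1/(4*(m:ℝ)^2))^2 * n / 2))) := by
    have hGc : G'ᶜ = (cubeS d)ᶜ ∪ ⋃ (p : Fin m), ⋃ (q : Fin m),
        {h : Fin d → ℝ | p = q ∨ |Spq p q h| ≤ 1/(2*(m:ℝ)) * n}ᶜ := by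
      rw [hG', Set.compl_inter, Set.compl_iInter]
      congr 1
      refine congrArg _ (funext fun p => ?_)
      rw [Set.compl_iInter]
    rw [hGc]
    calc radPi d ((cubeS d)ᶜ ∪ ⋃ (p : Fin m), ⋃ (q : Fin m),
          {h : Fin d → ℝ | p = q ∨ |Spq p q h| ≤ 1/(2*(m:ℝ)) * n}ᶜ)
        ≤ radPi d (cubeS d)ᶜ + radPi d (⋃ (p : Fin m), ⋃ (q : Fin m),
            {h : Fin d → ℝ | p = q ∨ |Spq p q h| ≤ 1/(2*(m:ℝ)) * n}ᶜ) := measure_union_le _ _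
      _ = radPi d (⋃ (p : Fin m), ⋃ (q : Fin m),
            {h : Fin d → ℝ | p = q ∨ |Spq p q h| ≤ 1/(2*(m:ℝ)) * n}ᶜ) := by
          rw [radPi_cubeS_compl, zero_add]
      _ ≤ ∑ p : Fin m, radPi d (⋃ (q : Fin m),
            {h : Fin d → ℝ | p = q ∨ |Spq p q h| ≤ 1/(2*(m:ℝ)) * n}ᶜ) :=
          measure_iUnion_fintype_le _ _
      _ ≤ ∑ p : Fin m, ∑ q : Fin m, radPi d
            {h : Fin d → ℝ | p = q ∨ |Spq p q h| ≤ 1/(2*(m:ℝ)) * n}ᶜ :=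
          Finset.sum_le_sum fun p _ => measure_iUnion_fintype_le _ _
      _ ≤ ∑ _p : Fin m, ∑ _q : Fin m,
            ENNReal.ofReal (4 * m * Real.exp (-(1/(4*(m:ℝ)^2))^2 * n / 2)) :=
          Finset.sum_le_sum fun p _ => Finset.sum_le_sum fun q _ => hpair p q
      _ = ENNReal.ofReal ((m:ℝ) * m * (4 * m * Real.exp (-(1/(4*(m:ℝ)^2))^2 * n / 2))) := by
          rw [Finset.sum_const, Finset.sum_const, Finset.card_univ, Fintype.card_fin,
            smul_smul, nsmul_eq_mul]
          rw [← ENNReal.ofReal_natCast (m*m)]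
          rw [← ENNReal.ofReal_mul (by positivity)]
          congr 1
          push_cast
          ring
  -- numeric bound
  have hNreal : (64*(m:ℝ)^4) * Real.log (4*(m:ℝ)^3) ≤ n := by
    calc (64*(m:ℝ)^4) * Real.log (4*(m:ℝ)^3)
        ≤ (⌈(64*(m:ℝ)^4) * Real.log (4*(m:ℝ)^3)⌉₊ : ℝ) := Nat.le_ceil _
      _ ≤ n := by exact_mod_cast hN
  have hfinal : (m:ℝ) * m * (4 * m * Real.exp (-(1/(4*(m:ℝ)^2))^2 * n / 2))
      ≤ Real.exp (-(1/(64*(m:ℝ)^4)) * n) := by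
    have hexp4 : (4*(m:ℝ)^3) ≤ Real.exp ((n:ℝ)/(64*(m:ℝ)^4)) := by
      rw [← Real.exp_log (by positivity : (0:ℝ) < 4*(m:ℝ)^3)]
      apply Real.exp_le_exp.2
      rw [le_div_iff₀ (by positivity)]
      nlinarith [hNreal]
    calc (m:ℝ) * m * (4 * m * Real.exp (-(1/(4*(m:ℝ)^2))^2 * n / 2))
        = (4*(m:ℝ)^3) * Real.exp (-(1/(4*(m:ℝ)^2))^2 * n / 2) := by ring
      _ ≤ Real.exp ((n:ℝ)/(64*(m:ℝ)^4)) * Real.exp (-(1/(4*(m:ℝ)^2))^2 * n / 2) :=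
          mul_le_mul_of_nonneg_right hexp4 (Real.exp_pos _).le
      _ = Real.exp ((n:ℝ)/(64*(m:ℝ)^4) + -(1/(4*(m:ℝ)^2))^2 * n / 2) := by
          rw [← Real.exp_add]
      _ = Real.exp (-(1/(64*(m:ℝ)^4)) * n) := by
          congr 1
          field_simp
          ring
  calc ENNReal.ofReal (1 - Real.exp (-(1/(64*(m:ℝ)^4)) * n))
      = 1 - ENNReal.ofReal (Real.exp (-(1/(64*(m:ℝ)^4)) * n)) := by
        rw [ENNReal.ofReal_sub _ (Real.exp_pos _).le, ENNReal.ofReal_one]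
    _ ≤ 1 - radPi d G'ᶜ := by
        apply tsub_le_tsub_left
        exact hcompl.trans (ENNReal.ofReal_le_ofReal hfinal)
    _ = radPi d G' := by
        have := prob_compl_eq_one_sub (μ := radPi d) hmeasG'.compl
        rw [compl_compl] at this
        rw [this]
    _ ≤ radPi d _ := measure_mono hsubG
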